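/- Let S be a subgroup of ℝ^p and Γ a full lattice of ℝ^p acting freely and properly on the homogeneous space ℝ^p/S (via translations). Then S is discrete, the subgroup generated by S and Γ is a full lattice of ℝ^p, and S is trivial. -/

import Mathlib

/-- Cocompactness gives a uniform bound: every point is within distance `d` of the lattice. -/
lemma stmt3_aux_bound (p : ℕ) (Γ : AddSubgroup (Fin p → ℝ))
    (hΓcocpt : CompactSpace ((Fin p → ℝ) ⧸ Γ)) :
    ∃ d : ℝ, 0 ≤ d ∧ ∀ x : Fin p → ℝ, ∃ γ ∈ Γ, ‖x - γ‖ ≤ d := by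
  classical
  have hsurj : Function.Surjective
      (QuotientAddGroup.mk : (Fin p → ℝ) → (Fin p → ℝ) ⧸ Γ) :=
    QuotientAddGroup.mk_surjective
  have hcover : (Set.univ : Set ((Fin p → ℝ) ⧸ Γ)) ⊆
      ⋃ n : ℕ, (QuotientAddGroup.mk '' Metric.ball (0 : Fin p → ℝ) n) := by
    intro q _
    obtain ⟨x, rfl⟩ := hsurj q
    obtain ⟨n, hn⟩ := exists_nat_gt ‖x‖
    exact Set.mem_iUnion.2 ⟨n, ⟨x, by simpa [Metric.mem_ball, dist_eq_norm] using hn, rfl⟩⟩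
  have hopen : ∀ n : ℕ, IsOpen (QuotientAddGroup.mk '' Metric.ball (0 : Fin p → ℝ) n) :=
    fun n => QuotientAddGroup.isOpenMap_coe (N := Γ) _ Metric.isOpen_ball
  obtain ⟨t, ht⟩ := isCompact_univ.elim_finite_subcover _ hopen hcover
  refine ⟨(t.sup id : ℕ), by positivity, fun x => ?_⟩
  have hx := ht (Set.mem_univ (QuotientAddGroup.mk x))
  simp only [Set.mem_iUnion, Set.mem_image] at hx
  obtain ⟨n, hnt, y, hy, hyx⟩ := hx
  have hmem : -y + x ∈ Γ := (QuotientAddGroup.eq).1 hyx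
  refine ⟨x - y, by simpa [sub_eq_neg_add] using hmem, ?_⟩
  have h1 : ‖x - (x - y)‖ = ‖y‖ := by ring_nf
  have h2 : ‖y‖ < n := by simpa [Metric.mem_ball, dist_eq_norm] using hy
  have h3 : (n : ℝ) ≤ (t.sup id : ℕ) := by exact_mod_cast Finset.le_sup (f := id) hnt
  linarith [h1, h2, h3]

/-- If S is a subgroup of ℝ^p and Γ a full lattice acting freely and
properly by translations on ℝ^p/S, then S is discrete, ⟨S, Γ⟩ is a full lattice
of ℝ^p, and S is trivial. -/
theorem stmt_3 (p : ℕ) (S Γ : AddSubgroup (Fin p → ℝ))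
    (hΓdisc : DiscreteTopology Γ) (hΓcocpt : CompactSpace ((Fin p → ℝ) ⧸ Γ))
    (hfree : ∀ γ ∈ Γ, ∀ x : (Fin p → ℝ) ⧸ S,
      (γ : (Fin p → ℝ) ⧸ S) + x = x → γ = 0)
    (hproper : ∀ K : Set ((Fin p → ℝ) ⧸ S), IsCompact K →
      {γ : Γ | ((fun x => ((γ : Fin p → ℝ) : (Fin p → ℝ) ⧸ S) + x) '' K ∩ K).Nonempty}.Finite) :
    DiscreteTopology S ∧
      (DiscreteTopology (S ⊔ Γ : AddSubgroup (Fin p → ℝ)) ∧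
        CompactSpace ((Fin p → ℝ) ⧸ (S ⊔ Γ : AddSubgroup (Fin p → ℝ)))) ∧
      S = ⊥ := by
  classical
  have hS : S = ⊥ := by
    by_contra hSne
    obtain ⟨s₀, hs0⟩ := (AddSubgroup.ne_bot_iff_exists_ne_zero).1 hSne
    have hsS : (s₀ : Fin p → ℝ) ∈ S := s₀.2
    set s : Fin p → ℝ := (s₀ : Fin p → ℝ) with hsdef
    obtain ⟨d, hd0, hbound⟩ := stmt3_aux_bound p Γ hΓcocpt
    have hsnorm : (0 : ℝ) < ‖(s : Fin p → ℝ)‖ := by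
      rw [norm_pos_iff]
      exact fun h => hs0 (Subtype.ext h)
    obtain ⟨m, hm⟩ := exists_nat_gt ((2 * d) / ‖(s : Fin p → ℝ)‖)
    have hm' : 2 * d < m * ‖(s : Fin p → ℝ)‖ := (div_lt_iff₀ hsnorm).1 hm
    -- the points v k = (m*k) • s lie in S
    set v : ℕ → Fin p → ℝ := fun k => (m * k) • (s : Fin p → ℝ) with hv
    have hvS : ∀ k, v k ∈ S := fun k => AddSubgroup.nsmul_mem S hsS _
    have hvnorm : ∀ k : ℕ, ‖v k‖ = (m * k : ℕ) * ‖(s : Fin p → ℝ)‖ := by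
      intro k
      rw [hv]
      simp only [← Nat.cast_smul_eq_nsmul ℝ, norm_smul]
      simp [abs_of_nonneg]
    choose g hgΓ hgd using fun k => hbound (v k)
    set f : ℕ → Γ := fun k => ⟨g k, hgΓ k⟩ with hf
    -- K = image of closed ball of radius d
    set K : Set ((Fin p → ℝ) ⧸ S) :=
      QuotientAddGroup.mk '' Metric.closedBall (0 : Fin p → ℝ) d with hK
    have hKcpt : IsCompact K :=
      (isCompact_closedBall 0 d).image continuous_quotient_mk'
    have hfmem : ∀ k, f k ∈
        {γ : Γ | ((fun x => ((γ : Fin p → ℝ) : (Fin p → ℝ) ⧸ S) + x) '' K ∩ K).Nonempty} := by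
      intro k
      refine ⟨(0 : (Fin p → ℝ) ⧸ S), ⟨QuotientAddGroup.mk (v k - g k), ?_, ?_⟩, ?_⟩
      · exact ⟨v k - g k, by
          simpa [Metric.mem_closedBall, dist_eq_norm] using hgd k, rfl⟩
      · show ((g k : (Fin p → ℝ) ⧸ S)) + QuotientAddGroup.mk (v k - g k) = 0
        have : ((g k + (v k - g k) : Fin p → ℝ) : (Fin p → ℝ) ⧸ S) = 0 := by
          rw [QuotientAddGroup.eq_zero_iff]
          simpa using hvS k
        simpa [QuotientAddGroup.mk_add] using this
      · exact ⟨0, by simpa using hd0, by simp⟩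
    have hfinj : Function.Injective f := by
      intro k l hkl
      by_contra hne
      have hgkl : g k = g l := congrArg Subtype.val hkl
      have h1 : ‖v k - g k‖ ≤ d := hgd k
      have h2 : ‖v l - g l‖ ≤ d := hgd l
      have h3 : ‖v k - v l‖ ≤ 2 * d := by
        have := norm_sub_le (v k - g k) (v l - g l)
        rw [hgkl] at h1
        calc ‖v k - v l‖ = ‖(v k - g l) - (v l - g l)‖ := by ring_nf
          _ ≤ ‖v k - g l‖ + ‖v l - g l‖ := norm_sub_le _ _
          _ ≤ d + d := add_le_add h1 h2
          _ = 2 * d := by ring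
      have h4 : (m : ℝ) * ‖(s : Fin p → ℝ)‖ ≤ ‖v k - v l‖ := by
        have hvkl : v k - v l = ((m : ℝ) * ((k : ℝ) - l)) • (s : Fin p → ℝ) := by
          rw [hv]
          simp only [← Nat.cast_smul_eq_nsmul ℝ, ← sub_smul]
          push_cast
          ring_nf
        rw [hvkl, norm_smul]
        have hkl1 : (1 : ℝ) ≤ |(k : ℝ) - l| := by
          have : (k : ℤ) ≠ (l : ℤ) := by exact_mod_cast hne
          have h5 : (1 : ℤ) ≤ |(k : ℤ) - l| := Int.one_le_abs (sub_ne_zero.2 this)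
          have : (1 : ℝ) ≤ |((k : ℤ) - l : ℤ)| := by exact_mod_cast h5
          simpa [Int.cast_abs] using this
        have hm0 : (0 : ℝ) ≤ m := by positivity
        rw [Real.norm_eq_abs, abs_mul, Nat.abs_cast]
        nlinarith [hsnorm]
      linarith
    exact (Set.infinite_of_injective_forall_mem hfinj hfmem) (hproper K hKcpt)
  subst hS
  refine ⟨?_, ⟨?_, ?_⟩, rfl⟩
  · exact Subsingleton.discreteTopology
  · rw [bot_sup_eq]; exact hΓdisc
  · rw [bot_sup_eq]; exact hΓcocpt
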